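/- Let a, b, y be points of the hyperbolic plane ℍ with b ≠ a and b ≠ y. Suppose that for every point p on the geodesic segment from b to y (i.e., every p with dist b p + dist p y = dist b y) one has dist a b ≤ dist a p. Then cosh(dist a y) ≥ cosh(dist a b)·cosh(dist b y); equivalently, the angle at b between the segments [b,a] and [b,y] is at least π/2. -/

import Mathlib

open Real UpperHalfPlane

noncomputable section

/-- Minkowski coordinates of a point of `ℍ` on the hyperboloid model. -/
def hypPhi0 (z : ℍ) : ℝ := (z.re ^ 2 + z.im ^ 2 + 1) / (2 * z.im)
def hypPhi1 (z : ℍ) : ℝ := z.re / z.im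
def hypPhi2 (z : ℍ) : ℝ := (z.re ^ 2 + z.im ^ 2 - 1) / (2 * z.im)

lemma cosh_inj_nonneg {x y : ℝ} (hx : 0 ≤ x) (hy : 0 ≤ y)
    (h : Real.cosh x = Real.cosh y) : x = y := by
  rcases lt_trichotomy x y with h' | h' | h'
  · have : Real.cosh x < Real.cosh y := by
      rw [Real.cosh_lt_cosh, abs_of_nonneg hx, abs_of_nonneg hy]; exact h'
    linarith
  · exact h'
  · have : Real.cosh y < Real.cosh x := by
      rw [Real.cosh_lt_cosh, abs_of_nonneg hy, abs_of_nonneg hx]; exact h'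
    linarith

lemma hyp_key (u₀ u₁ u₂ : ℝ) (hu : u₀ ^ 2 - u₁ ^ 2 - u₂ ^ 2 = 1) (hpos : 0 < u₀ - u₂)
    (z w : ℍ) (hre : z.re = u₁ / (u₀ - u₂)) (him : z.im = 1 / (u₀ - u₂)) :
    Real.cosh (dist z w) = u₀ * hypPhi0 w - u₁ * hypPhi1 w - u₂ * hypPhi2 w := by
  have hwim : 0 < w.im := w.im_pos
  rw [UpperHalfPlane.cosh_dist, Complex.dist_eq, Complex.sq_norm, Complex.normSq_apply]
  simp only [Complex.sub_re, Complex.sub_im, UpperHalfPlane.coe_re, UpperHalfPlane.coe_im]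
  rw [hre, him, hypPhi0, hypPhi1, hypPhi2]
  field_simp
  linear_combination (-1 : ℝ) * hu

lemma hypPhi_norm (z : ℍ) : hypPhi0 z ^ 2 - hypPhi1 z ^ 2 - hypPhi2 z ^ 2 = 1 := by
  have h : 0 < z.im := z.im_pos
  rw [hypPhi0, hypPhi1, hypPhi2]
  field_simp
  ring

lemma hypPhi_sub_pos (z : ℍ) : 0 < hypPhi0 z - hypPhi2 z := by
  have h : 0 < z.im := z.im_pos
  rw [hypPhi0, hypPhi2]
  rw [div_sub_div_same]
  have : z.re ^ 2 + z.im ^ 2 + 1 - (z.re ^ 2 + z.im ^ 2 - 1) = 2 := by ring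
  rw [this]
  positivity

lemma cosh_dist_eq (z w : ℍ) :
    Real.cosh (dist z w) =
      hypPhi0 z * hypPhi0 w - hypPhi1 z * hypPhi1 w - hypPhi2 z * hypPhi2 w := by
  have h : 0 < z.im := z.im_pos
  have hsub : hypPhi0 z - hypPhi2 z = 1 / z.im := by
    rw [hypPhi0, hypPhi2, div_sub_div_same]
    rw [show z.re ^ 2 + z.im ^ 2 + 1 - (z.re ^ 2 + z.im ^ 2 - 1) = 2 by ring]
    rw [div_eq_div_iff (by positivity) (by positivity)]
    ring
  refine hyp_key _ _ _ (hypPhi_norm z) (hypPhi_sub_pos z) z w ?_ ?_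
  · rw [hsub, hypPhi1]; field_simp
  · rw [hsub]; field_simp

end

/-- In the hyperbolic plane, if `b ≠ a`, `b ≠ y`, and `dist a b ≤ dist a p` for every point
`p` on the geodesic segment from `b` to `y`, then
`cosh (dist a y) ≥ cosh (dist a b) * cosh (dist b y)`, i.e. the angle at `b` between the
segments `[b,a]` and `[b,y]` is at least `π/2`. -/
theorem hyperbolic_obtuse_angle_of_min_dist
    (a b y : UpperHalfPlane) (hba : b ≠ a) (hby : b ≠ y)
    (hmin : ∀ p : UpperHalfPlane, dist b p + dist p y = dist b y → dist a b ≤ dist a p) :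
    Real.cosh (dist a y) ≥ Real.cosh (dist a b) * Real.cosh (dist b y) := by
  set L := dist b y with hLdef
  have hL : 0 < L := dist_pos.2 hby
  have hsL : 0 < Real.sinh L := Real.sinh_pos_iff.2 hL
  -- main inequality on (0, L)
  have main : ∀ t ∈ Set.Ioo (0:ℝ) L,
      Real.cosh (dist a b) * Real.cosh (L - t/2) ≤ Real.cosh (dist a y) * Real.cosh (t/2) := by
    intro t ht
    obtain ⟨ht0, htL⟩ := ht
    have hst : 0 < Real.sinh t := Real.sinh_pos_iff.2 ht0
    have hsLt : 0 < Real.sinh (L - t) := Real.sinh_pos_iff.2 (by linarith)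
    -- Minkowski coordinates of the geodesic point at parameter t
    set u₀ := (Real.sinh (L - t) * hypPhi0 b + Real.sinh t * hypPhi0 y) / Real.sinh L with hu₀
    set u₁ := (Real.sinh (L - t) * hypPhi1 b + Real.sinh t * hypPhi1 y) / Real.sinh L with hu₁
    set u₂ := (Real.sinh (L - t) * hypPhi2 b + Real.sinh t * hypPhi2 y) / Real.sinh L with hu₂
    have hby' : Real.cosh L = hypPhi0 b * hypPhi0 y - hypPhi1 b * hypPhi1 y
        - hypPhi2 b * hypPhi2 y := by rw [← hLdef] at *; exact cosh_dist_eq b y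
    have hQb := hypPhi_norm b
    have hQy := hypPhi_norm y
    have hsinsq : Real.sinh (L - t) ^ 2 + Real.sinh t ^ 2
        + 2 * Real.sinh (L - t) * Real.sinh t * Real.cosh L = Real.sinh L ^ 2 := by
      have h1 : Real.sinh (L - t) = Real.sinh L * Real.cosh t - Real.cosh L * Real.sinh t :=
        Real.sinh_sub L t
      have h2 : Real.cosh L ^ 2 = Real.sinh L ^ 2 + 1 := Real.cosh_sq L
      have h3 : Real.cosh t ^ 2 = Real.sinh t ^ 2 + 1 := Real.cosh_sq t
      rw [h1]; linear_combination Real.sinh L ^ 2 * h3 - Real.sinh t ^ 2 * h2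
    have hu : u₀ ^ 2 - u₁ ^ 2 - u₂ ^ 2 = 1 := by
      rw [hu₀, hu₁, hu₂]
      rw [div_pow, div_pow, div_pow, div_sub_div_same, div_sub_div_same,
        div_eq_one_iff_eq (by positivity)]
      linear_combination Real.sinh (L - t) ^ 2 * hQb + Real.sinh t ^ 2 * hQy
        - 2 * Real.sinh (L - t) * Real.sinh t * hby' + hsinsq
    have hpos : 0 < u₀ - u₂ := by
      rw [hu₀, hu₂, div_sub_div_same]
      apply div_pos _ hsL
      have hb' := hypPhi_sub_pos b
      have hy' := hypPhi_sub_pos y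
      nlinarith
    -- the point p on the geodesic
    set p : UpperHalfPlane := ⟨⟨u₁ / (u₀ - u₂), 1 / (u₀ - u₂)⟩, by
      simp only [Complex.im]
      positivity⟩ with hpdef
    have hre : p.re = u₁ / (u₀ - u₂) := rfl
    have him : p.im = 1 / (u₀ - u₂) := rfl
    have hp : ∀ w : UpperHalfPlane, Real.cosh (dist p w) =
        (Real.sinh (L - t) * Real.cosh (dist b w) + Real.sinh t * Real.cosh (dist y w))
          / Real.sinh L := by
      intro w
      rw [hyp_key u₀ u₁ u₂ hu hpos p w hre him, cosh_dist_eq b w, cosh_dist_eq y w,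
        hu₀, hu₁, hu₂]
      field_simp
      ring
    have hpb : dist p b = t := by
      have h1 : Real.cosh (dist p b) = Real.cosh t := by
        rw [hp b]
        have hbb : dist b b = 0 := dist_self b
        have hyb : dist y b = L := by rw [dist_comm]
        rw [hbb, hyb, Real.cosh_zero]
        rw [div_eq_iff (ne_of_gt hsL)]
        rw [Real.sinh_sub]; ring
      exact cosh_inj_nonneg dist_nonneg ht0.le h1
    have hpy : dist p y = L - t := by
      have h1 : Real.cosh (dist p y) = Real.cosh (L - t) := by
        rw [hp y]
        have hyy : dist y y = 0 := dist_self y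
        rw [hyy, Real.cosh_zero, ← hLdef]
        rw [div_eq_iff (ne_of_gt hsL)]
        rw [Real.sinh_sub, Real.cosh_sub]
        linear_combination (-1 : ℝ) * Real.sinh t * Real.cosh_sq L
      exact cosh_inj_nonneg dist_nonneg (by linarith) h1
    have hseg : dist b p + dist p y = dist b y := by
      rw [dist_comm b p, hpb, hpy, ← hLdef]; ring
    have hle : dist a b ≤ dist a p := hmin p hseg
    have hcosh_le : Real.cosh (dist a b) ≤ Real.cosh (dist a p) := by
      rw [Real.cosh_le_cosh, abs_of_nonneg dist_nonneg, abs_of_nonneg dist_nonneg]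
      exact hle
    have hap : Real.cosh (dist a p) =
        (Real.sinh (L - t) * Real.cosh (dist a b) + Real.sinh t * Real.cosh (dist a y))
          / Real.sinh L := by
      rw [dist_comm a p, hp a, dist_comm b a, dist_comm y a]
    rw [hap, le_div_iff₀ hsL] at hcosh_le
    -- now: cosh(ab) * sinh L ≤ sinh(L-t) cosh(ab) + sinh t cosh(ay)
    have key : Real.cosh (dist a b) * (Real.sinh L - Real.sinh (L - t))
        ≤ Real.sinh t * Real.cosh (dist a y) := by linarith
    have hhalf : 0 < Real.sinh (t/2) := Real.sinh_pos_iff.2 (by linarith)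
    have e1 : Real.sinh L - Real.sinh (L - t) = 2 * Real.sinh (t/2) * Real.cosh (L - t/2) := by
      have A := Real.sinh_add (L - t/2) (t/2)
      have B := Real.sinh_sub (L - t/2) (t/2)
      rw [show L - t/2 + t/2 = L by ring] at A
      rw [show L - t/2 - t/2 = L - t by ring] at B
      linarith
    have e2 : Real.sinh t = 2 * Real.sinh (t/2) * Real.cosh (t/2) := by
      have A := Real.sinh_add (t/2) (t/2)
      rw [show t/2 + t/2 = t by ring] at A
      linarith
    rw [e1, e2] at key
    have := mul_le_mul_of_nonneg_left key (le_of_lt (inv_pos.2 hhalf))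
    calc Real.cosh (dist a b) * Real.cosh (L - t/2)
        = (Real.sinh (t/2))⁻¹ * (Real.cosh (dist a b)
            * (2 * Real.sinh (t/2) * Real.cosh (L - t/2))) / 2 := by
          field_simp
      _ ≤ (Real.sinh (t/2))⁻¹ * (2 * Real.sinh (t/2) * Real.cosh (t/2)
            * Real.cosh (dist a y)) / 2 := by linarith
      _ = Real.cosh (dist a y) * Real.cosh (t/2) := by field_simp
  -- take the limit t → 0⁺
  have hF : ContinuousOn (fun t : ℝ => Real.cosh (dist a y) * Real.cosh (t/2)
      - Real.cosh (dist a b) * Real.cosh (L - t/2)) Set.univ := by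
    apply Continuous.continuousOn
    fun_prop
  have htend : Filter.Tendsto (fun t : ℝ => Real.cosh (dist a y) * Real.cosh (t/2)
      - Real.cosh (dist a b) * Real.cosh (L - t/2)) (nhdsWithin 0 (Set.Ioi 0))
      (nhds (Real.cosh (dist a y) * Real.cosh (0/2)
        - Real.cosh (dist a b) * Real.cosh (L - 0/2))) := by
    apply Filter.Tendsto.mono_left _ nhdsWithin_le_nhds
    exact (Continuous.tendsto (by fun_prop) 0)
  have hev : ∀ᶠ t in nhdsWithin (0:ℝ) (Set.Ioi 0),
      0 ≤ Real.cosh (dist a y) * Real.cosh (t/2)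
        - Real.cosh (dist a b) * Real.cosh (L - t/2) := by
    filter_upwards [Ioo_mem_nhdsGT_of_mem (Set.mem_Ico.2 ⟨le_refl 0, hL⟩)] with t ht
    have := main t ht
    linarith
  have hfin : 0 ≤ Real.cosh (dist a y) * Real.cosh (0/2)
      - Real.cosh (dist a b) * Real.cosh (L - 0/2) :=
    ge_of_tendsto htend hev
  simp only [zero_div, Real.cosh_zero, sub_zero, mul_one] at hfin
  linarith
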